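/- arXiv:1308.4013 — 3 statements merged into one kernel-verified Lean document; each statement's English description precedes it below -/
import Mathlib

section
/- If f : 2^V → ℝ is a monotone submodular set function on a finite ground set V, and G(S) = E[f(⋃_{s∈S} Y_s)] is the expectation over independent random set-valued variables Y_s ⊆ V, then G is a monotone submodular set function on subsets S of the index set W. -/
/-- Monotone + element-submodular implies set-submodular: adding a whole set
`Y` has diminishing returns. -/
lemma set_submodular {V : Type*} [DecidableEq V] (f : Finset V → ℝ)
    (hmono : ∀ A B : Finset V, A ⊆ B → f A ≤ f B)
    (hsub : ∀ (A B : Finset V) (a : V), A ⊆ B → a ∉ B →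
      f (A ∪ {a}) - f A ≥ f (B ∪ {a}) - f B) :
    ∀ (Y A B : Finset V), A ⊆ B → f (A ∪ Y) - f A ≥ f (B ∪ Y) - f B := by
  intro Y
  induction Y using Finset.induction_on with
  | empty => intro A B _; simp
  | @insert a Y ha ih =>
    intro A B hAB
    have key : f (A ∪ Y ∪ {a}) - f (A ∪ Y) ≥ f (B ∪ Y ∪ {a}) - f (B ∪ Y) := by
      by_cases hmem : a ∈ B ∪ Y
      · have : B ∪ Y ∪ {a} = B ∪ Y := by
          ext x; simp only [Finset.mem_union, Finset.mem_singleton]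
          constructor
          · rintro (h | rfl)
            · exact h
            · simpa using hmem
          · tauto
        rw [this]
        have := hmono (A ∪ Y) (A ∪ Y ∪ {a}) (Finset.subset_union_left)
        linarith
      · exact hsub (A ∪ Y) (B ∪ Y) a (Finset.union_subset_union_left hAB) hmem
    have hY := ih A B hAB
    have e1 : A ∪ insert a Y = A ∪ Y ∪ {a} := by
      ext x; simp [Finset.mem_union, Finset.mem_insert]
    have e2 : B ∪ insert a Y = B ∪ Y ∪ {a} := by
      ext x; simp [Finset.mem_union, Finset.mem_insert]
    rw [e1, e2]
    linarith

/-- Expectation (over independent set-valued variables, modeled by a product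
distribution on `W → Finset V`) of a monotone submodular coverage function is
monotone submodular. -/
theorem stmt0 {V W : Type*} [Fintype V] [DecidableEq V] [Fintype W] [DecidableEq W]
    (f : Finset V → ℝ)
    (hmono : ∀ A B : Finset V, A ⊆ B → f A ≤ f B)
    (hsub : ∀ (A B : Finset V) (a : V), A ⊆ B → a ∉ B →
      f (A ∪ {a}) - f A ≥ f (B ∪ {a}) - f B)
    (q : W → Finset V → ℝ) (hq0 : ∀ w y, 0 ≤ q w y)
    (hq1 : ∀ w, ∑ y : Finset V, q w y = 1)
    (G : Finset W → ℝ)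
    (hG : ∀ S : Finset W,
      G S = ∑ ω : W → Finset V, (∏ w : W, q w (ω w)) * f (S.biUnion fun s => ω s)) :
    (∀ S T : Finset W, S ⊆ T → G S ≤ G T) ∧
    (∀ (S T : Finset W) (w : W), S ⊆ T → w ∉ T →
      G (S ∪ {w}) - G S ≥ G (T ∪ {w}) - G T) := by
  have hw : ∀ ω : W → Finset V, 0 ≤ ∏ w : W, q w (ω w) := fun ω =>
    Finset.prod_nonneg fun w _ => hq0 w (ω w)
  constructor
  · intro S T hST
    rw [hG S, hG T]
    apply Finset.sum_le_sum
    intro ω _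
    exact mul_le_mul_of_nonneg_left
      (hmono _ _ (Finset.biUnion_subset_biUnion_of_subset_left _ hST)) (hw ω)
  · intro S T w hST hwT
    rw [hG S, hG T, hG (S ∪ {w}), hG (T ∪ {w})]
    rw [← Finset.sum_sub_distrib, ← Finset.sum_sub_distrib]
    apply Finset.sum_le_sum
    intro ω _
    rw [← mul_sub, ← mul_sub]
    apply mul_le_mul_of_nonneg_left _ (hw ω)
    have e : ∀ U : Finset W, ((U ∪ {w}).biUnion fun s => ω s) =
        (U.biUnion fun s => ω s) ∪ ω w := by
      intro U
      ext x; simp only [Finset.mem_biUnion, Finset.mem_union, Finset.mem_singleton]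
      constructor
      · rintro ⟨s, (hs | rfl), hx⟩
        exacts [Or.inl ⟨s, hs, hx⟩, Or.inr hx]
      · rintro (⟨s, hs, hx⟩ | hx)
        exacts [⟨s, Or.inl hs, hx⟩, ⟨w, Or.inr rfl, hx⟩]
    rw [e S, e T]
    exact set_submodular f hmono hsub (ω w) _ _
      (Finset.biUnion_subset_biUnion_of_subset_left _ hST)
end

section
/- Suppose a sequence of nonnegative reals g_0 = 0, g_1, …, g_{l+1} and positive costs b_1,…,b_{l+1} with ∑_{i=1}^{l+1} b_i > B > 0 satisfy, for each i, g_i ≥ (b_i/B)·OPT + (1 - b_i/B)·g_{i-1}, where OPT ≥ 0. Then g_{l+1} ≥ (1 - ∏_{i=1}^{l+1}(1 - b_i/B))·OPT ≥ (1 - 1/e)·OPT, assuming each b_i ≤ B. -/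
/-- Standard greedy recursion for budgeted submodular maximization. -/
theorem stmt5 (l : ℕ) (B OPT : ℝ) (hB : 0 < B) (hOPT : 0 ≤ OPT)
    (b : Fin (l+1) → ℝ) (hb : ∀ i, 0 < b i) (hble : ∀ i, b i ≤ B)
    (hsum : ∑ i, b i > B)
    (g : ℕ → ℝ) (hg0 : g 0 = 0) (hgnn : ∀ i, 0 ≤ g i)
    (hrec : ∀ i : Fin (l+1),
      g ((i : ℕ) + 1) ≥ (b i / B) * OPT + (1 - b i / B) * g (i : ℕ)) :
    g (l+1) ≥ (1 - ∏ i, (1 - b i / B)) * OPT ∧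
    g (l+1) ≥ (1 - 1 / Real.exp 1) * OPT := by
  set c : ℕ → ℝ := fun i => if h : i < l + 1 then b ⟨i, h⟩ / B else 0 with hc
  have hc0 : ∀ i, 0 ≤ c i := by
    intro i
    simp only [hc]
    split
    · exact le_of_lt (div_pos (hb _) hB)
    · exact le_refl 0
  have hc1 : ∀ i, c i ≤ 1 := by
    intro i
    simp only [hc]
    split
    · exact div_le_one_of_le₀ (hble _) hB.le
    · norm_num
  -- main induction
  have key : ∀ k, k ≤ l + 1 →
      g k ≥ (1 - ∏ i ∈ Finset.range k, (1 - c i)) * OPT := by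
    intro k hk
    induction k with
    | zero => simp [hg0]
    | succ n ih =>
      have hn : n < l + 1 := hk
      have ihn := ih (le_of_lt hn)
      have hrecn := hrec ⟨n, hn⟩
      have hcn : c n = b ⟨n, hn⟩ / B := by simp [hc, hn, Nat.le_of_lt_succ hn]
      have h1 : g (n + 1) ≥ c n * OPT + (1 - c n) * g n := by
        rw [hcn]; exact hrecn
      have h2 : (1 - c n) * g n ≥ (1 - c n) * ((1 - ∏ i ∈ Finset.range n, (1 - c i)) * OPT) :=
        mul_le_mul_of_nonneg_left ihn (by linarith [hc1 n])
      calc g (n + 1) ≥ c n * OPT + (1 - c n) * ((1 - ∏ i ∈ Finset.range n, (1 - c i)) * OPT) := by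
            linarith
        _ = (1 - ∏ i ∈ Finset.range (n + 1), (1 - c i)) * OPT := by
            rw [Finset.prod_range_succ]; ring
  have hprod_eq : (∏ i, (1 - b i / B)) = ∏ i ∈ Finset.range (l + 1), (1 - c i) := by
    rw [← Fin.prod_univ_eq_prod_range (fun i => 1 - c i) (l + 1)]
    apply Finset.prod_congr rfl
    intro i _
    simp [hc, i.isLt, Nat.le_of_lt_succ i.isLt]
  have part1 : g (l + 1) ≥ (1 - ∏ i, (1 - b i / B)) * OPT := by
    rw [hprod_eq]; exact key (l + 1) le_rfl
  refine ⟨part1, ?_⟩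
  -- bound the product by 1/e
  have hprod_le : (∏ i, (1 - b i / B)) ≤ 1 / Real.exp 1 := by
    have h1 : (∏ i, (1 - b i / B)) ≤ ∏ i, Real.exp (-(b i / B)) := by
      apply Finset.prod_le_prod
      · intro i _
        have := hble i
        have : b i / B ≤ 1 := div_le_one_of_le₀ this hB.le
        linarith
      · intro i _
        linarith [Real.add_one_le_exp (-(b i / B))]
    have h2 : (∏ i, Real.exp (-(b i / B))) = Real.exp (-(∑ i, b i) / B) := by
      rw [← Real.exp_sum]
      congr 1
      rw [neg_div, Finset.sum_div, ← Finset.sum_neg_distrib]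
    have h3 : Real.exp (-(∑ i, b i) / B) ≤ Real.exp (-1) := by
      apply Real.exp_le_exp.mpr
      rw [neg_div, neg_le_neg_iff]
      exact (one_le_div hB).mpr hsum.le
    calc (∏ i, (1 - b i / B)) ≤ ∏ i, Real.exp (-(b i / B)) := h1
      _ = Real.exp (-(∑ i, b i) / B) := h2
      _ ≤ Real.exp (-1) := h3
      _ = 1 / Real.exp 1 := by rw [Real.exp_neg]; exact inv_eq_one_div _
  have : (1 - 1 / Real.exp 1) * OPT ≤ (1 - ∏ i, (1 - b i / B)) * OPT := by
    apply mul_le_mul_of_nonneg_right _ hOPT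
    linarith
  linarith
end

section
/- Let Δ_1,…,Δ_l > 0 and b_1,…,b_l > 0 be such that b_{k+1}/Δ_{k+1} ≤ b_{k+2}/Δ_{k+2} ≤ … ≤ b_l/Δ_l and b_{k+1} > (B/α)·Δ_{k+1}/(∑_{i=1}^k Δ_i + Δ_{k+1}), and suppose ∑_{j=k+1}^l b_j ≤ B. Then ∑_{j=k+1}^l Δ_j < α·(∑_{i=1}^k Δ_i + Δ_{k+1}). -/
/-- Proportional-share stopping rule bounds the missed utility. -/
theorem stmt8 (k l : ℕ) (hkl : k < l) (B α : ℝ) (hB : 0 < B) (hα : 0 < α)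
    (Δ b : ℕ → ℝ)
    (hΔ : ∀ i, 1 ≤ i → i ≤ l → 0 < Δ i)
    (hb : ∀ i, 1 ≤ i → i ≤ l → 0 < b i)
    (hsorted : ∀ j, k + 1 ≤ j → j < l → b j / Δ j ≤ b (j+1) / Δ (j+1))
    (hviol : b (k+1) > (B / α) * Δ (k+1) / ((∑ i ∈ Finset.Icc 1 k, Δ i) + Δ (k+1)))
    (hbudget : ∑ j ∈ Finset.Icc (k+1) l, b j ≤ B) :
    ∑ j ∈ Finset.Icc (k+1) l, Δ j < α * ((∑ i ∈ Finset.Icc 1 k, Δ i) + Δ (k+1)) := by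
  set S := (∑ i ∈ Finset.Icc 1 k, Δ i) + Δ (k+1) with hSdef
  have hS : 0 < S := by
    have h1 : 0 ≤ ∑ i ∈ Finset.Icc 1 k, Δ i := by
      apply Finset.sum_nonneg
      intro i hi
      simp only [Finset.mem_Icc] at hi
      exact (hΔ i hi.1 (by omega)).le
    have h2 : 0 < Δ (k+1) := hΔ _ (by omega) (by omega)
    linarith
  set c := B / (α * S) with hcdef
  have hc : 0 < c := div_pos hB (mul_pos hα hS)
  have hΔk1 : 0 < Δ (k+1) := hΔ _ (by omega) (by omega)
  have hkey : c < b (k+1) / Δ (k+1) := by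
    rw [lt_div_iff₀ hΔk1]
    have heq : (B / α) * Δ (k+1) / S = c * Δ (k+1) := by
      rw [hcdef]; field_simp
    linarith [heq ▸ hviol]
  have hchain : ∀ j, k + 1 ≤ j → j ≤ l → b (k+1) / Δ (k+1) ≤ b j / Δ j := by
    intro j hj1
    induction j, hj1 using Nat.le_induction with
    | base => intro _; exact le_refl _
    | succ n hn ih =>
      intro hnl
      exact le_trans (ih (by omega)) (hsorted n hn (by omega))
  have hterm : ∀ j ∈ Finset.Icc (k+1) l, c * Δ j < b j := by
    intro j hj
    simp only [Finset.mem_Icc] at hj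
    have hΔj : 0 < Δ j := hΔ j (by omega) hj.2
    have := lt_of_lt_of_le hkey (hchain j hj.1 hj.2)
    rw [lt_div_iff₀ hΔj] at this
    exact this
  have hne : (Finset.Icc (k+1) l).Nonempty := by
    rw [Finset.nonempty_Icc]; omega
  have hsum : c * ∑ j ∈ Finset.Icc (k+1) l, Δ j < B := by
    rw [Finset.mul_sum]
    calc ∑ j ∈ Finset.Icc (k+1) l, c * Δ j < ∑ j ∈ Finset.Icc (k+1) l, b j :=
          Finset.sum_lt_sum_of_nonempty hne hterm
      _ ≤ B := hbudget
  have hcαS : c * (α * S) = B := by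
    rw [hcdef]; field_simp
  nlinarith [mul_pos hα hS]
end
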